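/- For every integer constant c > 1 there exist a constant C > 0, an oracle A assigning to every feasible port-numbered graph a binary advice string, and a function f, such that for every feasible port-numbered graph G of diameter D and election index φ: the advice length |A(G)| is at most C·(1 + log(1 + log φ)), and the assignment v ↦ f(A(G), B^{D+c·φ}(v)) is a leader election output for G. That is, leader election in time at most D + c·φ can be achieved with O(log log φ) bits of advice. -/

import Mathlib

namespace Election

/-- A port-numbered graph: a simple undirected connected graph on `n ≥ 3` unlabeled nodes
(vertex set `Fin n`) in which, at each node `v` of degree `d`, the edges incident to `v`
carry distinct port numbers `0, …, d-1` at `v`. `portNum v u` is the port number at `v`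
of the edge `{v, u}` (meaningful only when `v` and `u` are adjacent). -/
structure PortGraph where
  n : ℕ
  three_le : 3 ≤ n
  G : SimpleGraph (Fin n)
  conn : G.Connected
  portNum : Fin n → Fin n → ℕ
  port_lt : ∀ v u : Fin n, G.Adj v u → portNum v u < Nat.card {w : Fin n // G.Adj v w}
  port_inj : ∀ v u w : Fin n, G.Adj v u → G.Adj v w → portNum v u = portNum v w → u = w

namespace PortGraph

/-- The degree of a node. -/
noncomputable def degree (PG : PortGraph) (v : Fin PG.n) : ℕ :=
  Nat.card {w : Fin PG.n // PG.G.Adj v w}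

open Classical in
/-- The neighbor of `v` reached through port `p` (junk value `v` if there is none). -/
noncomputable def nbr (PG : PortGraph) (v : Fin PG.n) (p : ℕ) : Fin PG.n :=
  if h : ∃ u : Fin PG.n, PG.G.Adj v u ∧ PG.portNum v u = p then h.choose else v

/-- Abstract (augmented truncated) views: a view at depth `0` is a leaf carrying a degree;
a view at depth `ℓ+1` is a node whose children are listed in the order of the port numbers
`0, …, d-1` at the root, each child carrying the port number at the other endpoint of the
corresponding edge together with the subview at depth `ℓ`. -/
inductive AugView : Type
  | leaf (deg : ℕ) : AugView
  | node (children : List (ℕ × AugView)) : AugView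

/-- The augmented truncated view `B^ℓ(v)` of node `v` at depth `ℓ`. -/
noncomputable def augView (PG : PortGraph) : ℕ → Fin PG.n → AugView
  | 0, v => AugView.leaf (PG.degree v)
  | (ℓ + 1), v => AugView.node ((List.range (PG.degree v)).map
      fun p => (PG.portNum (PG.nbr v p) v, PG.augView ℓ (PG.nbr v p)))

/-- `IsPath PG v s vs` means: the sequence `s = (p₁, q₁, …, p_k, q_k)` of port numbers codes
a path in `PG` starting at `v` whose i-th edge carries port `p_i` at the endpoint closer to
`v` and `q_i` at the other endpoint, and `vs` is the list of visited vertices (from `v` on). -/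
inductive IsPath (PG : PortGraph) : Fin PG.n → List ℕ → List (Fin PG.n) → Prop
  | nil (v : Fin PG.n) : IsPath PG v [] [v]
  | cons (v u : Fin PG.n) (p q : ℕ) (rest : List ℕ) (vs : List (Fin PG.n))
      (hadj : PG.G.Adj v u) (hp : PG.portNum v u = p) (hq : PG.portNum u v = q)
      (htail : IsPath PG u rest vs) : IsPath PG v (p :: q :: rest) (v :: vs)

/-- `P` is a leader election output for `PG`: every node `v` outputs a sequence of port
numbers coding a simple path starting at `v`, and all these paths end at a common node. -/
def IsLeaderElection (PG : PortGraph) (P : Fin PG.n → List ℕ) : Prop :=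
  ∃ leader : Fin PG.n, ∀ v : Fin PG.n, ∃ vs : List (Fin PG.n),
    PG.IsPath v (P v) vs ∧ vs.Nodup ∧ vs.getLast? = some leader

/-- A graph is feasible if at some depth all augmented truncated views are pairwise distinct. -/
def Feasible (PG : PortGraph) : Prop :=
  ∃ ℓ : ℕ, Function.Injective (PG.augView ℓ)

/-- The election index: the smallest depth at which all augmented truncated views are distinct. -/
noncomputable def electionIndex (PG : PortGraph) : ℕ :=
  sInf {ℓ : ℕ | Function.Injective (PG.augView ℓ)}

/-- The diameter: the maximum distance between two nodes. -/
noncomputable def diam (PG : PortGraph) : ℕ :=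
  sSup (Set.range fun p : Fin PG.n × Fin PG.n => PG.G.dist p.1 p.2)

end PortGraph


namespace PortGraph

/-! ### Basic facts about ports and neighbors -/

variable (PG : PortGraph)

lemma exists_ne' (v : Fin PG.n) : ∃ u : Fin PG.n, u ≠ v := by
  have h1 : 1 < Fintype.card (Fin PG.n) := by
    simpa using lt_of_lt_of_le (by norm_num) PG.three_le
  exact Fintype.exists_ne_of_one_lt_card h1 v

lemma exists_adj (v : Fin PG.n) : ∃ u, PG.G.Adj v u := by
  obtain ⟨u, hu⟩ := PG.exists_ne' v
  obtain ⟨p⟩ := PG.conn.preconnected v u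
  cases p with
  | nil => exact absurd rfl hu
  | cons h q => exact ⟨_, h⟩

lemma degree_pos (v : Fin PG.n) : 0 < PG.degree v := by
  obtain ⟨u, hu⟩ := PG.exists_adj v
  have : Nonempty {w : Fin PG.n // PG.G.Adj v w} := ⟨⟨u, hu⟩⟩
  exact Nat.card_pos

lemma exists_adj_port (v : Fin PG.n) (p : ℕ) (hp : p < PG.degree v) :
    ∃ u, PG.G.Adj v u ∧ PG.portNum v u = p := by
  set f : {w : Fin PG.n // PG.G.Adj v w} → Fin (PG.degree v) :=
    fun u => ⟨PG.portNum v u.1, PG.port_lt v u.1 u.2⟩ with hf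
  have hinj : Function.Injective f := by
    intro a b hab
    have := PG.port_inj v a.1 b.1 a.2 b.2 (by simpa [hf] using congrArg Fin.val hab)
    exact Subtype.ext this
  have hbij : Function.Bijective f := by
    rw [Nat.bijective_iff_injective_and_card]
    exact ⟨hinj, by simp [degree]⟩
  obtain ⟨u, hu⟩ := hbij.2 ⟨p, hp⟩
  exact ⟨u.1, u.2, congrArg Fin.val hu⟩

lemma nbr_spec (v : Fin PG.n) (p : ℕ) (hp : p < PG.degree v) :
    PG.G.Adj v (PG.nbr v p) ∧ PG.portNum v (PG.nbr v p) = p := by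
  have h := PG.exists_adj_port v p hp
  rw [nbr, dif_pos h]
  exact h.choose_spec

lemma nbr_portNum (v u : Fin PG.n) (h : PG.G.Adj v u) :
    PG.nbr v (PG.portNum v u) = u := by
  have hp : PG.portNum v u < PG.degree v := PG.port_lt v u h
  obtain ⟨h1, h2⟩ := PG.nbr_spec v (PG.portNum v u) hp
  exact PG.port_inj v _ u h1 h h2

/-! ### Tree combinators on views -/

/-- Truncation of a view to depth `k`. -/
def trunc : ℕ → AugView → AugView
  | _, .leaf d => .leaf d
  | 0, .node ch => .leaf ch.length
  | (k+1), .node ch => .node (ch.map fun c => (c.1, trunc k c.2))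

/-- The depth of a view (along its leftmost branch). -/
def depth : AugView → ℕ
  | .leaf _ => 0
  | .node [] => 0
  | .node ((_, t) :: _) => depth t + 1

/-- Navigation inside a view along a sequence of port pairs. -/
def nav : AugView → List ℕ → Option AugView
  | t, [] => some t
  | AugView.node ch, p :: q :: rest =>
      match ch[p]? with
      | some c => if c.1 = q then nav c.2 rest else none
      | none => none
  | _, _ => none

lemma nav_leaf (d : ℕ) (x : ℕ) (xs : List ℕ) : nav (.leaf d) (x :: xs) = none := by
  cases xs <;> rfl

lemma nav_one (ch : List (ℕ × AugView)) (x : ℕ) : nav (.node ch) [x] = none := rfl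

lemma trunc_augView : ∀ (k ℓ : ℕ) (v : Fin PG.n), k ≤ ℓ →
    trunc k (PG.augView ℓ v) = PG.augView k v := by
  intro k
  induction k with
  | zero =>
    intro ℓ v _
    cases ℓ with
    | zero => rfl
    | succ ℓ => simp [augView, trunc]
  | succ k ih =>
    intro ℓ v hk
    cases ℓ with
    | zero => omega
    | succ ℓ =>
      simp only [augView, trunc, List.map_map]
      congr 1
      apply List.map_congr_left
      intro p _
      simp [Function.comp, ih ℓ (PG.nbr v p) (by omega)]

lemma depth_augView : ∀ (ℓ : ℕ) (v : Fin PG.n), depth (PG.augView ℓ v) = ℓ := by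
  intro ℓ
  induction ℓ with
  | zero => intro v; rfl
  | succ ℓ ih =>
    intro v
    have hd : 0 < PG.degree v := PG.degree_pos v
    obtain ⟨d, hd'⟩ : ∃ d, PG.degree v = d + 1 := ⟨PG.degree v - 1, by omega⟩
    simp only [augView, hd', List.range_succ_eq_map, List.map_cons, depth]
    rw [ih]

lemma nav_augView_cons (v : Fin PG.n) (p q : ℕ) (rest : List ℕ) (ℓ : ℕ)
    (hp : p < PG.degree v) :
    nav (PG.augView (ℓ+1) v) (p :: q :: rest) =
      if PG.portNum (PG.nbr v p) v = q then nav (PG.augView ℓ (PG.nbr v p)) rest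
      else none := by
  simp only [augView, nav, List.getElem?_map, List.getElem?_range hp, Option.map_some]

lemma nav_augView_cons_ge (v : Fin PG.n) (p q : ℕ) (rest : List ℕ) (ℓ : ℕ)
    (hp : ¬ p < PG.degree v) :
    nav (PG.augView (ℓ+1) v) (p :: q :: rest) = none := by
  have : ((List.range (PG.degree v)).map
      (fun p => (PG.portNum (PG.nbr v p) v, PG.augView ℓ (PG.nbr v p))))[p]? = none := by
    rw [List.getElem?_eq_none]
    simpa using Nat.le_of_not_lt hp
  simp only [augView, nav, this]

/-! ### Navigation versus paths in the graph -/

lemma isPath_length {v : Fin PG.n} {out : List ℕ} {vs : List (Fin PG.n)}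
    (h : PG.IsPath v out vs) : out.length = 2 * (vs.length - 1) ∧ vs ≠ [] := by
  induction h with
  | nil v => simp
  | cons v u p q rest vs hadj hp hq htail ih =>
    obtain ⟨h1, h2⟩ := ih
    have : vs.length ≠ 0 := fun hh => h2 (List.length_eq_zero_iff.mp hh)
    refine ⟨?_, by simp⟩
    simp only [List.length_cons, h1]
    omega

lemma nav_of_isPath {v : Fin PG.n} {out : List ℕ} {vs : List (Fin PG.n)}
    (h : PG.IsPath v out vs) : ∀ ℓ : ℕ, vs.length ≤ ℓ + 1 →
    ∀ i : ℕ, (hi : i < vs.length) →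
      nav (PG.augView ℓ v) (out.take (2*i)) = some (PG.augView (ℓ - i) vs[i]) := by
  induction h with
  | nil v =>
    intro ℓ _ i hi
    have hi0 : i = 0 := by simpa using hi
    subst hi0
    simp [nav]
  | cons v u p q rest vs hadj hp hq htail ih =>
    intro ℓ hℓ i hi
    cases i with
    | zero => simp [nav]
    | succ i =>
      simp only [List.length_cons] at hℓ hi
      have hvs : 1 ≤ vs.length := by omega
      obtain ⟨ℓ', rfl⟩ : ∃ ℓ', ℓ = ℓ' + 1 := ⟨ℓ - 1, by omega⟩
      have htake : (p :: q :: rest).take (2 * (i+1)) = p :: q :: rest.take (2*i) := by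
        have : 2 * (i + 1) = 2 * i + 1 + 1 := by ring
        rw [this, List.take_succ_cons, List.take_succ_cons]
      rw [htake]
      have hpd : p < PG.degree v := hp ▸ PG.port_lt v u hadj
      have hnb : PG.nbr v p = u := hp ▸ PG.nbr_portNum v u hadj
      rw [PG.nav_augView_cons v p q _ ℓ' hpd, hnb, if_pos hq]
      have := ih ℓ' (by omega) i (by omega)
      simpa using this

lemma nav_sound : ∀ (ℓ : ℕ) (out : List ℕ) (v : Fin PG.n) (t : AugView),
    nav (PG.augView ℓ v) out = some t →
    ∃ (u : Fin PG.n) (vs : List (Fin PG.n)), PG.IsPath v out vs ∧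
      out.length = 2 * (vs.length - 1) ∧ vs.getLast? = some u ∧
      t = PG.augView (ℓ - out.length / 2) u := by
  intro ℓ
  induction ℓ with
  | zero =>
    intro out v t hnav
    cases out with
    | nil =>
      refine ⟨v, [v], IsPath.nil v, by simp, by simp, ?_⟩
      simpa [nav] using hnav.symm
    | cons x xs =>
      rw [show PG.augView 0 v = .leaf (PG.degree v) from rfl, nav_leaf] at hnav
      exact absurd hnav (by simp)
  | succ ℓ ih =>
    intro out v t hnav
    cases out with
    | nil =>
      refine ⟨v, [v], IsPath.nil v, by simp, by simp, ?_⟩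
      simpa [nav] using hnav.symm
    | cons p out' =>
      cases out' with
      | nil =>
        rw [show (PG.augView (ℓ+1) v) = AugView.node _ from rfl, nav_one] at hnav
        exact absurd hnav (by simp)
      | cons q rest =>
        by_cases hpd : p < PG.degree v
        · rw [PG.nav_augView_cons v p q rest ℓ hpd] at hnav
          by_cases hq : PG.portNum (PG.nbr v p) v = q
          · rw [if_pos hq] at hnav
            obtain ⟨u, vs, h1, h2, h3, h4⟩ := ih rest (PG.nbr v p) t hnav
            obtain ⟨hadj, hport⟩ := PG.nbr_spec v p hpd
            have hne : vs ≠ [] := (PG.isPath_length h1).2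
            refine ⟨u, v :: vs, IsPath.cons v (PG.nbr v p) p q rest vs hadj hport hq h1,
              ?_, ?_, ?_⟩
            · simp only [List.length_cons, h2]
              have : vs.length ≠ 0 := fun hh => hne (List.length_eq_zero_iff.mp hh)
              omega
            · obtain ⟨a, vs', rfl⟩ : ∃ a vs', vs = a :: vs' :=
                ⟨vs.head hne, vs.tail, (List.cons_head_tail hne).symm⟩
              rw [List.getLast?_cons_cons]
              exact h3
            · rw [h4]
              congr 1
              simp only [List.length_cons]
              omega
          · rw [if_neg hq] at hnav
            exact absurd hnav (by simp)
        · rw [PG.nav_augView_cons_ge v p q rest ℓ hpd] at hnav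
          exact absurd hnav (by simp)

lemma walk_isPath : ∀ {a b : Fin PG.n} (p : PG.G.Walk a b),
    ∃ out : List ℕ, PG.IsPath a out p.support ∧ out.length = 2 * p.length := by
  intro a b p
  induction p with
  | nil => exact ⟨[], by rw [SimpleGraph.Walk.support_nil]; exact IsPath.nil _, by simp⟩
  | @cons x y z h q ih =>
    obtain ⟨out, h1, h2⟩ := ih
    refine ⟨PG.portNum x y :: PG.portNum y x :: out, ?_, ?_⟩
    · rw [SimpleGraph.Walk.support_cons]
      exact IsPath.cons x y _ _ out q.support h rfl rfl h1
    · simp only [List.length_cons, SimpleGraph.Walk.length_cons, h2]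
      omega

lemma support_getLast? : ∀ {a b : Fin PG.n} (p : PG.G.Walk a b),
    p.support.getLast? = some b := by
  intro a b p
  induction p with
  | nil => simp
  | cons h q ih =>
    rw [SimpleGraph.Walk.support_cons]
    obtain ⟨x, xs, hxs⟩ : ∃ x xs, q.support = x :: xs :=
      ⟨q.support.head q.support_ne_nil, q.support.tail,
        (List.cons_head_tail q.support_ne_nil).symm⟩
    rw [hxs, List.getLast?_cons_cons, ← hxs]
    exact ih

lemma inj_mono {ℓ k : ℕ} (h : Function.Injective (PG.augView ℓ)) (hk : ℓ ≤ k) :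
    Function.Injective (PG.augView k) := by
  intro u u' he
  apply h
  rw [← PG.trunc_augView ℓ k u hk, he, PG.trunc_augView ℓ k u' hk]

lemma dist_le_diam' (v u : Fin PG.n) : PG.G.dist v u ≤ PG.diam :=
  le_csSup (Set.finite_range _).bddAbove ⟨(v, u), rfl⟩

lemma exists_path_to (v targ : Fin PG.n) :
    ∃ out vs, PG.IsPath v out vs ∧ vs.Nodup ∧ vs.getLast? = some targ ∧
      out.length ≤ 2 * PG.diam := by
  classical
  obtain ⟨pw, hpw⟩ := (PG.conn.preconnected v targ).exists_walk_length_eq_dist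
  set p := pw.bypass with hp
  obtain ⟨out, hip, holen⟩ := PG.walk_isPath p
  refine ⟨out, p.support, hip, pw.bypass_isPath.support_nodup, PG.support_getLast? p, ?_⟩
  have h1 : p.length ≤ pw.length := pw.length_bypass_le
  have h2 : pw.length ≤ PG.diam := hpw ▸ PG.dist_le_diam' v targ
  omega

lemma nav_full {v : Fin PG.n} {out : List ℕ} {vs : List (Fin PG.n)}
    (h : PG.IsPath v out vs) (ℓ : ℕ) (hlen : vs.length ≤ ℓ + 1)
    {u : Fin PG.n} (hu : vs.getLast? = some u) :
    nav (PG.augView ℓ v) out = some (PG.augView (ℓ - (vs.length - 1)) u) ∧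
      out.length = 2 * (vs.length - 1) := by
  obtain ⟨hL, hne⟩ := PG.isPath_length h
  have hvs0 : vs.length ≠ 0 := fun hh => hne (List.length_eq_zero_iff.mp hh)
  have hd : vs.length - 1 < vs.length := by omega
  have F := PG.nav_of_isPath h ℓ hlen (vs.length - 1) hd
  have htake : out.take (2 * (vs.length - 1)) = out := List.take_of_length_le (by omega)
  rw [htake] at F
  have hvu : vs[vs.length - 1] = u := by
    have := List.getLast?_eq_getElem? (l := vs)
    rw [hu, List.getElem?_eq_getElem hd] at this
    exact (Option.some_injective _ this).symm
  rw [hvu] at F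
  exact ⟨F, hL⟩

end PortGraph

/-! ### Binary encoding of natural numbers -/

def encNat : ℕ → List Bool
  | 0 => []
  | (n+1) => (decide ((n+1) % 2 = 1)) :: encNat ((n+1)/2)
decreasing_by exact Nat.div_lt_self (Nat.succ_pos n) one_lt_two

def decNat : List Bool → ℕ
  | [] => 0
  | b :: l => 2 * decNat l + (if b then 1 else 0)

lemma decNat_encNat : ∀ n : ℕ, decNat (encNat n) = n := by
  intro n
  induction n using Nat.strong_induction_on with
  | _ n ih =>
    match n with
    | 0 => simp [encNat, decNat]
    | (m+1) =>
      rw [encNat, decNat, ih ((m+1)/2) (Nat.div_lt_self (Nat.succ_pos m) one_lt_two)]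
      rcases Nat.mod_two_eq_zero_or_one (m+1) with h | h <;>
        · simp [h]
          omega

lemma encNat_length : ∀ n : ℕ, (encNat n).length ≤ Nat.log 2 n + 1 := by
  intro n
  induction n using Nat.strong_induction_on with
  | _ n ih =>
    match n with
    | 0 => simp [encNat]
    | 1 => simp [encNat]
    | (m+2) =>
      rw [encNat, List.length_cons]
      have h1 := ih ((m+1+1)/2) (Nat.div_lt_self (Nat.succ_pos _) one_lt_two)
      have h2 : Nat.log 2 ((m+1+1)/2) = Nat.log 2 (m+1+1) - 1 := Nat.log_div_base 2 (m+1+1)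
      have h3 : 0 < Nat.log 2 (m+1+1) := Nat.log_pos one_lt_two (by omega)
      have h4 : Nat.log 2 (m+1+1) = Nat.log 2 (m+2) := rfl
      omega

def decodeK : List Bool → ℕ
  | true :: rest => 2 ^ decNat rest
  | _ => 0

def encodeK (φ : ℕ) : List Bool :=
  if φ = 0 then [false] else true :: encNat (Nat.clog 2 φ)

lemma decodeK_encodeK_zero : decodeK (encodeK 0) = 0 := rfl

lemma decodeK_encodeK (φ : ℕ) (hφ : 0 < φ) :
    φ ≤ decodeK (encodeK φ) ∧ decodeK (encodeK φ) ≤ 2 * φ := by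
  have h : encodeK φ = true :: encNat (Nat.clog 2 φ) := by
    rw [encodeK, if_neg (by omega)]
  rw [h]
  have hd : decodeK (true :: encNat (Nat.clog 2 φ)) = 2 ^ Nat.clog 2 φ := by
    rw [decodeK, decNat_encNat]
  rw [hd]
  constructor
  · exact Nat.le_pow_clog one_lt_two φ
  · rcases Nat.lt_or_ge φ 2 with h2 | h2
    · have : φ = 1 := by omega
      subst this
      simp [Nat.clog_one_right]
    · have hc : 0 < Nat.clog 2 φ := Nat.clog_pos one_lt_two h2
      have hlt : 2 ^ (Nat.clog 2 φ - 1) < φ := by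
        have := Nat.pow_pred_clog_lt_self one_lt_two (x := φ) (by omega)
        simpa only [Nat.pred_eq_sub_one] using this
      calc 2 ^ Nat.clog 2 φ = 2 * 2 ^ (Nat.clog 2 φ - 1) := by
            rw [← pow_succ']
            congr 1
            omega
        _ ≤ 2 * φ := by omega

lemma advice_length_bound (φ : ℕ) :
    ((encodeK φ).length : ℝ) ≤ 4 * (1 + Real.logb 2 (1 + Real.logb 2 (φ : ℝ))) := by
  have hlogφ : (0:ℝ) ≤ Real.logb 2 (φ : ℝ) := by
    rcases Nat.eq_zero_or_pos φ with h | h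
    · simp [h]
    · exact Real.logb_nonneg one_lt_two (by exact_mod_cast h)
  have houter : (0:ℝ) ≤ Real.logb 2 (1 + Real.logb 2 (φ : ℝ)) :=
    Real.logb_nonneg one_lt_two (by linarith)
  rcases Nat.lt_or_ge φ 2 with h2 | h2
  · have hlen : (encodeK φ).length ≤ 2 := by
      interval_cases φ <;> simp [encodeK, encNat, Nat.clog_one_right]
    have : ((encodeK φ).length : ℝ) ≤ 2 := by exact_mod_cast hlen
    linarith
  · have hφ0 : φ ≠ 0 := by omega
    set e := Nat.clog 2 φ with he
    have hlen : (encodeK φ).length = (encNat e).length + 1 := by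
      rw [encodeK, if_neg hφ0]; simp [he]
    have hLe : (encNat e).length ≤ Nat.log 2 e + 1 := encNat_length e
    have heb : e ≤ Nat.log 2 φ + 1 := by
      have hc : 0 < e := Nat.clog_pos one_lt_two h2
      have hlt : 2 ^ (e - 1) < φ := by
        have := Nat.pow_pred_clog_lt_self one_lt_two (x := φ) (by omega)
        simpa only [Nat.pred_eq_sub_one] using this
      have := (Nat.le_log_iff_pow_le one_lt_two hφ0).mpr (le_of_lt hlt)
      omega
    have hce : (0:ℝ) < (e:ℝ) := by
      have : 0 < e := Nat.clog_pos one_lt_two h2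
      exact_mod_cast this
    have s1 : ((Nat.log 2 e : ℕ) : ℝ) ≤ Real.logb 2 (e : ℝ) := by
      exact_mod_cast Real.natLog_le_logb e 2
    have s2 : Real.logb 2 (e : ℝ) ≤ Real.logb 2 ((Nat.log 2 φ : ℝ) + 1) := by
      apply Real.logb_le_logb_of_le one_lt_two hce
      exact_mod_cast heb
    have s3 : Real.logb 2 ((Nat.log 2 φ : ℝ) + 1) ≤ Real.logb 2 (1 + Real.logb 2 (φ:ℝ)) := by
      apply Real.logb_le_logb_of_le one_lt_two (by positivity)
      have := Real.natLog_le_logb φ 2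
      push_cast at this ⊢
      linarith
    have hlenR : ((encodeK φ).length : ℝ) ≤ 2 + ((Nat.log 2 e : ℕ) : ℝ) := by
      rw [hlen]
      push_cast
      have : ((encNat e).length : ℝ) ≤ (Nat.log 2 e : ℝ) + 1 := by exact_mod_cast hLe
      linarith
    linarith

/-! ### The output rule -/

open PortGraph in
/-- `GoodOut k w out` : `out` codes, inside the view `w`, a walk whose visited nodes have
pairwise distinct depth-`k` truncated views, staying at depth at most `depth w - k`, and
ending at a node whose depth-`k` truncated view is minimal (in a fixed well-order) among
all nodes of `w` of depth at most `depth w - k`. -/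
def GoodOut (k : ℕ) (w : AugView) (out : List ℕ) : Prop :=
  out.length ≤ 2 * (depth w - k) ∧
  ∃ t, nav w out = some t ∧
    (∀ i j : ℕ, i < j → j ≤ out.length / 2 →
      Option.map (trunc k) (nav w (out.take (2*i))) ≠
        Option.map (trunc k) (nav w (out.take (2*j)))) ∧
    (∀ out' t', out'.length ≤ 2 * (depth w - k) → nav w out' = some t' →
      ¬ WellOrderingRel (trunc k t') (trunc k t))

open Classical in
noncomputable def outputRule : List Bool → PortGraph.AugView → List ℕ := fun adv w =>
  if h : ∃ out, GoodOut (decodeK adv) w out then h.choose else []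

open PortGraph in
lemma key (PG : PortGraph) (k L : ℕ)
    (hinj : Function.Injective (PG.augView k)) (hL : PG.diam + k ≤ L) :
    ∃ leader : Fin PG.n, ∀ v : Fin PG.n,
      (∃ out, GoodOut k (PG.augView L v) out) ∧
      ∀ out, GoodOut k (PG.augView L v) out →
        ∃ vs, PG.IsPath v out vs ∧ vs.Nodup ∧ vs.getLast? = some leader := by
  have hne : Nonempty (Fin PG.n) := ⟨⟨0, by have := PG.three_le; omega⟩⟩
  have wf : WellFounded (WellOrderingRel (α := AugView)) := IsWellFounded.wf
  set S : Set AugView := Set.range (PG.augView k) with hSdef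
  have hS : S.Nonempty := Set.range_nonempty _
  obtain ⟨ld, hld⟩ := wf.min_mem S hS
  have hmin : ∀ u : Fin PG.n,
      ¬ WellOrderingRel (PG.augView k u) (PG.augView k ld) := by
    intro u
    rw [hld]
    exact wf.not_lt_min S (Set.mem_range_self u)
  refine ⟨ld, fun v => ?_⟩
  have hdepth : depth (PG.augView L v) = L := PG.depth_augView L v
  -- the canonical path from v to ld inside the view
  obtain ⟨out₀, vs₀, hip₀, hnd₀, hlast₀, hol₀⟩ := PG.exists_path_to v ld
  have hlen₀ := (PG.isPath_length hip₀).1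
  have hne₀ := (PG.isPath_length hip₀).2
  have hvs₀0 : vs₀.length ≠ 0 := fun hh => hne₀ (List.length_eq_zero_iff.mp hh)
  have hd₀ : vs₀.length - 1 ≤ PG.diam := by omega
  obtain ⟨hnav₀, -⟩ := PG.nav_full hip₀ L (by omega) hlast₀
  have F₀ := PG.nav_of_isPath hip₀ L (by omega)
  constructor
  · -- existence of a good output
    refine ⟨out₀, ?_, PG.augView (L - (vs₀.length - 1)) ld, hnav₀, ?_, ?_⟩
    · rw [hdepth]; omega
    · -- distinct truncations along the path
      intro i j hij hj hcontra
      have hj' : j < vs₀.length := by omega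
      have hi' : i < vs₀.length := by omega
      rw [F₀ i hi', F₀ j hj'] at hcontra
      simp only [Option.map_some] at hcontra
      rw [PG.trunc_augView k (L - i) _ (by omega),
        PG.trunc_augView k (L - j) _ (by omega)] at hcontra
      have : vs₀[i] = vs₀[j] := hinj (Option.some_injective _ hcontra)
      have hinj_get := List.nodup_iff_injective_get.mp hnd₀
      have : (⟨i, hi'⟩ : Fin vs₀.length) = ⟨j, hj'⟩ := by
        apply hinj_get
        simpa [List.get_eq_getElem] using this
      simp at this
      omega
    · -- minimality of the endpoint
      intro out' t' hlen' hnav'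
      rw [hdepth] at hlen'
      obtain ⟨u', vs', hip', hlen2, hlast', ht'⟩ := PG.nav_sound L out' v t' hnav'
      rw [ht', PG.trunc_augView k _ _ (by omega),
        PG.trunc_augView k _ _ (by omega), hld]
      exact wf.not_lt_min S (Set.mem_range_self u')
  · -- correctness of any good output
    rintro out ⟨h1, t, h2, h3, h4⟩
    rw [hdepth] at h1 h4
    obtain ⟨u, vs, hip, hlen, hlast, ht⟩ := PG.nav_sound L out v t h2
    have hnevs := (PG.isPath_length hip).2
    have hvs0 : vs.length ≠ 0 := fun hh => hnevs (List.length_eq_zero_iff.mp hh)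
    have hvsL : vs.length - 1 ≤ L - k := by omega
    have F := PG.nav_of_isPath hip L (by omega)
    refine ⟨vs, hip, ?_, ?_⟩
    · -- Nodup
      rw [List.nodup_iff_injective_get]
      rintro ⟨i, hi⟩ ⟨j, hj⟩ heq
      simp only [List.get_eq_getElem] at heq
      rcases lt_trichotomy i j with hij | hij | hij
      · exfalso
        apply h3 i j hij (by omega)
        rw [F i hi, F j hj]
        simp only [Option.map_some]
        rw [PG.trunc_augView k (L - i) _ (by omega),
          PG.trunc_augView k (L - j) _ (by omega), heq]
      · exact Fin.ext hij
      · exfalso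
        apply h3 j i hij (by omega)
        rw [F i hi, F j hj]
        simp only [Option.map_some]
        rw [PG.trunc_augView k (L - i) _ (by omega),
          PG.trunc_augView k (L - j) _ (by omega), heq]
    · -- endpoint is the leader
      have hu : u = ld := by
        have hmin_u : ¬ WellOrderingRel (PG.augView k ld) (PG.augView k u) := by
          have := h4 out₀ (PG.augView (L - (vs₀.length - 1)) ld)
            (by omega) hnav₀
          rw [ht, PG.trunc_augView k _ _ (by omega),
            PG.trunc_augView k _ _ (by omega)] at this
          exact this
        rcases trichotomous_of WellOrderingRel
            (PG.augView k ld) (PG.augView k u) with h | h | h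
        · exact absurd h hmin_u
        · exact (hinj h).symm
        · exact absurd h (hmin u)
      rw [hu] at hlast
      exact hlast



/-- Leader election in time at most `D + c·φ` can be achieved with `O(log log φ)` bits of
advice. -/
theorem advice_upper_bound_time_D_add_c_mul_phi (c : ℕ) (hc : 1 < c) :
    ∃ (C : ℝ) (A : PortGraph → List Bool)
      (f : List Bool → PortGraph.AugView → List ℕ), 0 < C ∧
      ∀ PG : PortGraph, PG.Feasible →
        (((A PG).length : ℝ) ≤
          C * (1 + Real.logb 2 (1 + Real.logb 2 (PG.electionIndex : ℝ)))) ∧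
        PG.IsLeaderElection
          (fun v => f (A PG) (PG.augView (PG.diam + c * PG.electionIndex) v)) := by
  classical
  refine ⟨4, fun PG => encodeK PG.electionIndex, outputRule, by norm_num, ?_⟩
  intro PG hPG
  set φ := PG.electionIndex with hφdef
  refine ⟨advice_length_bound φ, ?_⟩
  -- decode the advice
  set k := decodeK (encodeK φ) with hkdef
  have hkφ : φ ≤ k ∧ k ≤ c * φ := by
    rcases Nat.eq_zero_or_pos φ with h0 | h0
    · rw [h0] at hkdef ⊢
      simp [hkdef, decodeK_encodeK_zero]
    · obtain ⟨ha, hb⟩ := decodeK_encodeK φ h0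
      exact ⟨ha, le_trans hb (by nlinarith)⟩
  have hinjφ : Function.Injective (PG.augView φ) := by
    have : φ ∈ {ℓ : ℕ | Function.Injective (PG.augView ℓ)} := by
      rw [hφdef, PortGraph.electionIndex]
      exact Nat.sInf_mem hPG
    exact this
  have hinj : Function.Injective (PG.augView k) := PG.inj_mono hinjφ hkφ.1
  set L := PG.diam + c * φ with hLdef
  have hL : PG.diam + k ≤ L := by
    rw [hLdef]
    omega
  obtain ⟨leader, hkey⟩ := key PG k L hinj hL
  refine ⟨leader, fun v => ?_⟩
  obtain ⟨hex, hcorr⟩ := hkey v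
  have hfeq : outputRule (encodeK φ) (PG.augView L v) =
      (hex : ∃ out, GoodOut k (PG.augView L v) out).choose := by
    rw [outputRule, dif_pos]
  show ∃ vs, PG.IsPath v (outputRule (encodeK φ) (PG.augView L v)) vs ∧
    vs.Nodup ∧ vs.getLast? = some leader
  rw [hfeq]
  exact hcorr _ hex.choose_spec

end Election
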